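/- If $\{a_n\}_{n=1}^\infty$ is a sequence of nonnegative reals with $\sum_{n=1}^\infty a_n < +\infty$, then for every $q \in \mathbb{N}$, $\sum_{i=q+1}^\infty a_i + \sum_{l=2}^\infty \sum_{1\le i_1 < i_2 < \cdots < i_l,\ i_l > q} \prod_{k=1}^l a_{i_k} \le \left(\sum_{i=q+1}^\infty a_i\right) \exp\left(\sum_{i=1}^\infty a_i\right)$. -/

import Mathlib

open scoped ENNReal
open Matrix Filter

noncomputable section

lemma aux_one_add_le (f : ℕ → ℝ≥0∞) :
    1 + (∑' U : {U : Finset ℕ // (∀ i ∈ U, 1 ≤ i) ∧ U.Nonempty}, ∏ i ∈ U.1, f i) ≤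
      ∑' U : {U : Finset ℕ // ∀ i ∈ U, 1 ≤ i}, ∏ i ∈ U.1, f i := by
  set s : Set {U : Finset ℕ // ∀ i ∈ U, 1 ≤ i} := {U | U.1.Nonempty} with hsdef
  have hsplit : (∑' x : ↥s, ∏ i ∈ x.1.1, f i) + (∑' x : ↥sᶜ, ∏ i ∈ x.1.1, f i) =
      ∑' U : {U : Finset ℕ // ∀ i ∈ U, 1 ≤ i}, ∏ i ∈ U.1, f i :=
    Summable.tsum_add_tsum_compl (s := s)
      (f := fun U : {U : Finset ℕ // ∀ i ∈ U, 1 ≤ i} => ∏ i ∈ U.1, f i)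
      ENNReal.summable ENNReal.summable
  rw [← hsplit, add_comm]
  refine add_le_add ?_ ?_
  · have hinj : Function.Injective
        (fun U : {U : Finset ℕ // (∀ i ∈ U, 1 ≤ i) ∧ U.Nonempty} =>
          (⟨⟨U.1, U.2.1⟩, U.2.2⟩ : ↥s)) := by
      intro x y h
      exact Subtype.ext (by simpa [Subtype.ext_iff] using h)
    exact ENNReal.tsum_comp_le_tsum_of_injective hinj (fun x : ↥s => ∏ i ∈ x.1.1, f i)
  · have := ENNReal.le_tsum (f := fun x : ↥sᶜ => ∏ i ∈ x.1.1, f i)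
      ⟨⟨∅, by simp⟩, by simp [hsdef]⟩
    simpa using this

lemma aux_S_le (f : ℕ → ℝ≥0∞) (q : ℕ) :
    (∑' S : {S : Finset ℕ // 2 ≤ S.card ∧ (∀ i ∈ S, 1 ≤ i) ∧ ∃ i ∈ S, q < i},
        ∏ i ∈ S.1, f i) ≤
      (∑' i : {i : ℕ // q + 1 ≤ i}, f i) *
        ∑' U : {U : Finset ℕ // (∀ i ∈ U, 1 ≤ i) ∧ U.Nonempty}, ∏ i ∈ U.1, f i := by
  have hne : ∀ S : {S : Finset ℕ // 2 ≤ S.card ∧ (∀ i ∈ S, 1 ≤ i) ∧ ∃ i ∈ S, q < i},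
      S.1.Nonempty := by
    intro S
    exact Finset.card_pos.mp (lt_of_lt_of_le (by norm_num) S.2.1)
  set j : {S : Finset ℕ // 2 ≤ S.card ∧ (∀ i ∈ S, 1 ≤ i) ∧ ∃ i ∈ S, q < i} →
      {i : ℕ // q + 1 ≤ i} × {U : Finset ℕ // (∀ i ∈ U, 1 ≤ i) ∧ U.Nonempty} :=
    fun S =>
      (⟨S.1.max' (hne S), by
          obtain ⟨i, hi, hqi⟩ := S.2.2.2
          exact le_trans hqi (S.1.le_max' i hi)⟩,
       ⟨S.1.erase (S.1.max' (hne S)),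
        ⟨fun i hi => S.2.2.1 i (Finset.mem_of_mem_erase hi), by
          rw [← Finset.card_pos, Finset.card_erase_of_mem (S.1.max'_mem (hne S))]
          omega⟩⟩) with hj
  have hjinj : Function.Injective j := by
    intro S1 S2 h
    have h1 : S1.1.max' (hne S1) = S2.1.max' (hne S2) := congrArg (·.1.1) h
    have h2 : S1.1.erase (S1.1.max' (hne S1)) = S2.1.erase (S2.1.max' (hne S2)) :=
      congrArg (·.2.1) h
    apply Subtype.ext
    rw [← Finset.insert_erase (S1.1.max'_mem (hne S1)), h2, h1,
      Finset.insert_erase (S2.1.max'_mem (hne S2))]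
  calc (∑' S : {S : Finset ℕ // 2 ≤ S.card ∧ (∀ i ∈ S, 1 ≤ i) ∧ ∃ i ∈ S, q < i},
        ∏ i ∈ S.1, f i)
      = ∑' S : {S : Finset ℕ // 2 ≤ S.card ∧ (∀ i ∈ S, 1 ≤ i) ∧ ∃ i ∈ S, q < i},
          f (j S).1.1 * ∏ i ∈ (j S).2.1, f i := by
        refine tsum_congr fun S => ?_
        rw [hj]
        exact (Finset.mul_prod_erase S.1 f (S.1.max'_mem (hne S))).symm
    _ ≤ ∑' p : {i : ℕ // q + 1 ≤ i} × {U : Finset ℕ // (∀ i ∈ U, 1 ≤ i) ∧ U.Nonempty},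
          f p.1.1 * ∏ i ∈ p.2.1, f i :=
        ENNReal.tsum_comp_le_tsum_of_injective hjinj _
    _ = (∑' i : {i : ℕ // q + 1 ≤ i}, f i) *
          ∑' U : {U : Finset ℕ // (∀ i ∈ U, 1 ≤ i) ∧ U.Nonempty}, ∏ i ∈ U.1, f i := by
        rw [ENNReal.tsum_prod']
        simp_rw [ENNReal.tsum_mul_left]
        rw [ENNReal.tsum_mul_right]

lemma aux_E_le (a : ℕ → ℝ) (ha : ∀ n, 0 ≤ a n) (hsum : Summable a) :
    (∑' U : {U : Finset ℕ // ∀ i ∈ U, 1 ≤ i}, ∏ i ∈ U.1, ENNReal.ofReal (a i)) ≤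
      ENNReal.ofReal (Real.exp (∑' i : {i : ℕ // 1 ≤ i}, a i)) := by
  have hb : Summable (Set.indicator {i : ℕ | 1 ≤ i} a) := hsum.indicator _
  have hss : (∑' i : {i : ℕ // 1 ≤ i}, a i) =
      ∑' i : ℕ, Set.indicator {i : ℕ | 1 ≤ i} a i := tsum_subtype _ _
  have hFs : ∀ F : Finset ℕ, (∀ i ∈ F, 1 ≤ i) →
      ∑ i ∈ F, a i ≤ ∑' i : {i : ℕ // 1 ≤ i}, a i := by
    intro F hF
    have h1 : ∑ i ∈ F, a i = ∑ i ∈ F, Set.indicator {i : ℕ | 1 ≤ i} a i := by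
      refine Finset.sum_congr rfl fun i hi => ?_
      exact (Set.indicator_of_mem (show i ∈ {i : ℕ | 1 ≤ i} from hF i hi) a).symm
    rw [h1, hss]
    refine Summable.sum_le_tsum F (fun i _ => ?_) hb
    exact Set.indicator_nonneg (fun i _ => ha i) i
  rw [ENNReal.tsum_eq_iSup_sum]
  refine iSup_le fun A => ?_
  set F : Finset ℕ := A.sup (fun U => U.1) with hF
  have hF1 : ∀ i ∈ F, 1 ≤ i := by
    intro i hi
    rw [hF, Finset.mem_sup] at hi
    obtain ⟨U, _, hiU⟩ := hi
    exact U.2 i hiU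
  calc ∑ U ∈ A, ∏ i ∈ U.1, ENNReal.ofReal (a i)
      = ∑ V ∈ A.image Subtype.val, ∏ i ∈ V, ENNReal.ofReal (a i) := by
        rw [Finset.sum_image (fun x _ y _ h => Subtype.ext h)]
    _ ≤ ∑ V ∈ F.powerset, ∏ i ∈ V, ENNReal.ofReal (a i) := by
        refine Finset.sum_le_sum_of_subset ?_
        intro V hV
        rw [Finset.mem_image] at hV
        obtain ⟨U, hU, rfl⟩ := hV
        rw [Finset.mem_powerset]
        exact Finset.le_sup (f := fun U : {U : Finset ℕ // ∀ i ∈ U, 1 ≤ i} => U.1) hU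
    _ = ∏ i ∈ F, (ENNReal.ofReal (a i) + 1) := by
        rw [Finset.prod_add]
        refine Finset.sum_congr rfl fun V _ => ?_
        simp
    _ ≤ ∏ i ∈ F, ENNReal.ofReal (Real.exp (a i)) := by
        refine Finset.prod_le_prod' fun i _ => ?_
        have h2 : ENNReal.ofReal (a i) + 1 = ENNReal.ofReal (a i + 1) := by
          rw [ENNReal.ofReal_add (ha i) zero_le_one, ENNReal.ofReal_one]
        rw [h2]
        exact ENNReal.ofReal_le_ofReal (by linarith [Real.add_one_le_exp (a i)])
    _ = ENNReal.ofReal (Real.exp (∑ i ∈ F, a i)) := by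
        rw [← ENNReal.ofReal_prod_of_nonneg (fun i _ => (Real.exp_pos _).le),
          Real.exp_sum]
    _ ≤ ENNReal.ofReal (Real.exp (∑' i : {i : ℕ // 1 ≤ i}, a i)) :=
        ENNReal.ofReal_le_ofReal (Real.exp_le_exp.mpr (hFs F hF1))

theorem stmt0 (a : ℕ → ℝ) (ha : ∀ n, 0 ≤ a n) (hsum : Summable a) (q : ℕ) :
    (∑' i : {i : ℕ // q + 1 ≤ i}, ENNReal.ofReal (a i)) +
      ∑' S : {S : Finset ℕ // 2 ≤ S.card ∧ (∀ i ∈ S, 1 ≤ i) ∧ ∃ i ∈ S, q < i},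
        ∏ i ∈ S.1, ENNReal.ofReal (a i) ≤
    (∑' i : {i : ℕ // q + 1 ≤ i}, ENNReal.ofReal (a i)) *
      ENNReal.ofReal (Real.exp (∑' i : {i : ℕ // 1 ≤ i}, a i)) := by
  refine le_trans (add_le_add_right (aux_S_le (fun i => ENNReal.ofReal (a i)) q) _) ?_
  calc (∑' i : {i : ℕ // q + 1 ≤ i}, ENNReal.ofReal (a i)) +
        (∑' i : {i : ℕ // q + 1 ≤ i}, ENNReal.ofReal (a i)) *
          (∑' U : {U : Finset ℕ // (∀ i ∈ U, 1 ≤ i) ∧ U.Nonempty},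
            ∏ i ∈ U.1, ENNReal.ofReal (a i))
      = (∑' i : {i : ℕ // q + 1 ≤ i}, ENNReal.ofReal (a i)) *
          (1 + ∑' U : {U : Finset ℕ // (∀ i ∈ U, 1 ≤ i) ∧ U.Nonempty},
            ∏ i ∈ U.1, ENNReal.ofReal (a i)) := by
        rw [mul_add, mul_one]
    _ ≤ (∑' i : {i : ℕ // q + 1 ≤ i}, ENNReal.ofReal (a i)) *
          ENNReal.ofReal (Real.exp (∑' i : {i : ℕ // 1 ≤ i}, a i)) :=
        mul_le_mul_right
          ((aux_one_add_le (fun i => ENNReal.ofReal (a i))).trans (aux_E_le a ha hsum)) _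

end
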